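/- Let v be a word over {a,b} with ℓ_a occurrences of a and ℓ_b occurrences of b. If v is not an isoterm for UT_2 (equivalently, there exists u ≠ v of the same content with conv(γ^{u,a}) = conv(γ^{v,a}) and conv(γ^{u,b}) = conv(γ^{v,b})), then ℓ_a ≥ 4; and if ℓ_a = 4, then ℓ_b > 6. -/

import Mathlib

set_option maxHeartbeats 10000000
set_option maxRecDepth 1000000

/-- The letter `a` of the two-letter alphabet, encoded as `true`. -/
def ltrA : Bool := true

/-- The letter `b` of the two-letter alphabet, encoded as `false`. -/
def ltrB : Bool := false

/-- `alphaH w i` is the number of `b`'s occurring before the `(i+1)`-th `a` in `w`. -/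
def alphaH : List Bool → ℕ → ℕ
  | [], _ => 0
  | (x :: rest), i =>
      if x = ltrA then (if i = 0 then 0 else alphaH rest (i - 1))
      else alphaH rest i + 1

/-- `betaH w i` is the number of `a`'s occurring before the `(i+1)`-th `b` in `w`. -/
def betaH (w : List Bool) (i : ℕ) : ℕ := alphaH (w.map (!·)) i

/-- The `a`-height `γ^{w,a} = {(i, α^w_i) : 0 ≤ i < ℓ_a}`, as a subset of `ℝ²`. -/
def gammaA (w : List Bool) : Set (ℝ × ℝ) :=
  {p | ∃ i, i < w.count ltrA ∧ p = ((i : ℝ), (alphaH w i : ℝ))}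

/-- The `b`-height `γ^{w,b} = {(β^w_i, i) : 0 ≤ i < ℓ_b}`, as a subset of `ℝ²`. -/
def gammaB (w : List Bool) : Set (ℝ × ℝ) :=
  {p | ∃ i, i < w.count ltrB ∧ p = ((betaH w i : ℝ), (i : ℝ))}

/-! ### Computable support-function machinery -/

/-- max of `f i` over `i ≤ n`. -/
def msup (f : ℕ → ℤ) : ℕ → ℤ
  | 0 => f 0
  | n+1 => max (msup f n) (f (n+1))

def fA (w : List Bool) (d : ℤ × ℤ) (i : ℕ) : ℤ := d.1 * i + d.2 * (alphaH w i)
def fB (w : List Bool) (d : ℤ × ℤ) (j : ℕ) : ℤ := d.1 * (betaH w j) + d.2 * j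

def dirsA : List (ℤ × ℤ) := [(-6,5),(5,-4),(-2,5),(1,-6),(-5,2),(5,-2),(-5,3),(5,-3)]
def dirsB : List (ℤ × ℤ) := [(-6,1),(3,-1)]

def enc (l : List ℤ) : ℕ := l.foldl (fun acc x => acc * 4096 + (x + 2000).toNat) 1

def keyOf (lb : ℕ) (w : List Bool) : ℕ :=
  enc ((dirsA.map fun d => msup (fA w d) 3) ++
       (if lb = 0 then [] else dirsB.map fun d => msup (fB w d) (lb - 1)))

def wordsAux (prev : ℕ → List (List Bool)) : ℕ → List (List Bool)
  | 0 => (prev 0).map (true :: ·)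
  | b+1 => ((prev (b+1)).map (true :: ·)) ++ ((wordsAux prev b).map (false :: ·))

def words : ℕ → ℕ → List (List Bool)
  | 0 => fun b => [List.replicate b false]
  | a+1 => wordsAux (words a)

def check (lb : ℕ) : Bool :=
  let L := (words 4 lb).map fun w => (w, keyOf lb w)
  L.all fun p => L.all fun p' => !(p.2 == p'.2) || p.1 == p'.1

/-! ### Elementary lemmas on `msup` -/

lemma le_msup (f : ℕ → ℤ) {i n : ℕ} (h : i ≤ n) : f i ≤ msup f n := by
  induction n with
  | zero =>
    have : i = 0 := by omega
    subst this; exact le_rfl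
  | succ n ih =>
    rcases Nat.lt_or_ge i (n+1) with h' | h'
    · exact le_trans (ih (by omega)) (le_max_left _ _)
    · have : i = n + 1 := by omega
      subst this; exact le_max_right _ _

lemma msup_le (f : ℕ → ℤ) {n : ℕ} {C : ℤ} (h : ∀ i ≤ n, f i ≤ C) : msup f n ≤ C := by
  induction n with
  | zero => exact h 0 le_rfl
  | succ n ih =>
    exact max_le (ih fun i hi => h i (by omega)) (h (n+1) le_rfl)

lemma msup_attain (f : ℕ → ℤ) (n : ℕ) : ∃ i ≤ n, msup f n = f i := by
  induction n with
  | zero => exact ⟨0, le_rfl, rfl⟩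
  | succ n ih =>
    obtain ⟨i, hi, he⟩ := ih
    rcases le_total (f (n+1)) (msup f n) with h | h
    · exact ⟨i, by omega, by rw [show msup f (n+1) = max (msup f n) (f (n+1)) from rfl, max_eq_left h, he]⟩
    · exact ⟨n+1, le_rfl, by rw [show msup f (n+1) = max (msup f n) (f (n+1)) from rfl, max_eq_right h]⟩

/-! ### Basic facts about words -/

lemma alphaH_le_countB (w : List Bool) (i : ℕ) : alphaH w i ≤ w.count ltrB := by
  induction w generalizing i with
  | nil => simp [alphaH]
  | cons x rest ih =>
    cases x with
    | true =>
      have hc : (true :: rest).count ltrB = rest.count ltrB := by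
        simp [ltrB, List.count_cons]
      rw [hc]
      show (if (true : Bool) = ltrA then (if i = 0 then 0 else alphaH rest (i - 1))
        else alphaH rest i + 1) ≤ rest.count ltrB
      rw [if_pos (by rfl)]
      split
      · exact Nat.zero_le _
      · exact ih _
    | false =>
      have hc : (false :: rest).count ltrB = rest.count ltrB + 1 := by
        simp [ltrB, List.count_cons]
      rw [hc]
      show (if (false : Bool) = ltrA then (if i = 0 then 0 else alphaH rest (i - 1))
        else alphaH rest i + 1) ≤ rest.count ltrB + 1
      rw [if_neg (by simp [ltrA])]
      exact Nat.succ_le_succ (ih _)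

lemma count_eq_zero_of_bool (w : List Bool) (ha : w.count ltrA = 0) (hb : w.count ltrB = 0) :
    w = [] := by
  cases w with
  | nil => rfl
  | cons x rest => cases x <;> simp [ltrA, ltrB, List.count_cons] at ha hb

lemma alphaH_cons_true_zero (rest : List Bool) : alphaH (true :: rest) 0 = 0 := by
  show (if (true : Bool) = ltrA then _ else _) = 0
  rw [if_pos (by rfl)]; rfl

lemma alphaH_cons_true_succ (rest : List Bool) (i : ℕ) :
    alphaH (true :: rest) (i+1) = alphaH rest i := by
  show (if (true : Bool) = ltrA then (if i + 1 = 0 then 0 else alphaH rest (i + 1 - 1))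
    else _) = alphaH rest i
  rw [if_pos (by rfl), if_neg (by omega), Nat.add_sub_cancel]

lemma alphaH_cons_false (rest : List Bool) (i : ℕ) :
    alphaH (false :: rest) i = alphaH rest i + 1 := by
  show (if (false : Bool) = ltrA then _ else alphaH rest i + 1) = alphaH rest i + 1
  rw [if_neg (by simp [ltrA])]

lemma count_cons_A_true (rest : List Bool) :
    (true :: rest).count ltrA = rest.count ltrA + 1 := by simp [ltrA, List.count_cons]
lemma count_cons_A_false (rest : List Bool) :
    (false :: rest).count ltrA = rest.count ltrA := by simp [ltrA, List.count_cons]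
lemma count_cons_B_true (rest : List Bool) :
    (true :: rest).count ltrB = rest.count ltrB := by simp [ltrB, List.count_cons]
lemma count_cons_B_false (rest : List Bool) :
    (false :: rest).count ltrB = rest.count ltrB + 1 := by simp [ltrB, List.count_cons]

/-- A word is determined by its letter counts together with its `α`-sequence. -/
lemma reconstruct : ∀ (u v : List Bool), u.count ltrA = v.count ltrA →
    u.count ltrB = v.count ltrB →
    (∀ i < v.count ltrA, alphaH u i = alphaH v i) → u = v := by
  intro u
  induction u with
  | nil =>
    intro v hca hcb _
    simp [List.count_nil] at hca hcb
    exact (count_eq_zero_of_bool v hca.symm hcb.symm).symm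
  | cons x rest ih =>
    intro v hca hcb hα
    cases v with
    | nil =>
      exfalso
      have := count_eq_zero_of_bool (x :: rest) (by simpa using hca) (by simpa using hcb)
      simp at this
    | cons y vrest =>
      cases x with
      | true =>
        cases y with
        | true =>
          have hca' : rest.count ltrA = vrest.count ltrA := by
            rw [count_cons_A_true, count_cons_A_true] at hca; omega
          have hcb' : rest.count ltrB = vrest.count ltrB := by
            rw [count_cons_B_true, count_cons_B_true] at hcb; omega
          have hα' : ∀ i < vrest.count ltrA, alphaH rest i = alphaH vrest i := by
            intro i hi
            have := hα (i+1) (by rw [count_cons_A_true]; omega)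
            rwa [alphaH_cons_true_succ, alphaH_cons_true_succ] at this
          rw [ih vrest hca' hcb' hα']
        | false =>
          exfalso
          have h0 := hα 0 (by have hc := hca; rw [count_cons_A_true, count_cons_A_false] at hc; rw [count_cons_A_false]; omega)
          rw [alphaH_cons_true_zero, alphaH_cons_false] at h0
          omega
      | false =>
        cases y with
        | true =>
          exfalso
          have h0 := hα 0 (by rw [count_cons_A_true]; omega)
          rw [alphaH_cons_false, alphaH_cons_true_zero] at h0
          omega
        | false =>
          have hca' : rest.count ltrA = vrest.count ltrA := by
            rw [count_cons_A_false, count_cons_A_false] at hca; omega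
          have hcb' : rest.count ltrB = vrest.count ltrB := by
            rw [count_cons_B_false, count_cons_B_false] at hcb; omega
          have hα' : ∀ i < vrest.count ltrA, alphaH rest i = alphaH vrest i := by
            intro i hi
            have := hα i (by rw [count_cons_A_false]; omega)
            rw [alphaH_cons_false, alphaH_cons_false] at this
            omega
          rw [ih vrest hca' hcb' hα']

/-! ### Transfer of support functions through convex hull equality -/

lemma supA_transfer (u v : List Bool)
    (hA : convexHull ℝ (gammaA u) = convexHull ℝ (gammaA v)) (p q M : ℝ)
    (hv : ∀ i, i < v.count ltrA → p * i + q * alphaH v i ≤ M) :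
    ∀ i, i < u.count ltrA → p * i + q * alphaH u i ≤ M := by
  intro i hi
  have hlin : IsLinearMap ℝ (fun x : ℝ × ℝ => p * x.1 + q * x.2) := by
    constructor
    · intro x y; simp [Prod.fst_add, Prod.snd_add]; ring
    · intro c x; simp [Prod.smul_fst, Prod.smul_snd, smul_eq_mul]; ring
  have hconv : Convex ℝ {x : ℝ × ℝ | p * x.1 + q * x.2 ≤ M} := convex_halfSpace_le hlin M
  have hsub : gammaA v ⊆ {x : ℝ × ℝ | p * x.1 + q * x.2 ≤ M} := by
    rintro _ ⟨j, hj, rfl⟩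
    exact hv j hj
  have h1 : convexHull ℝ (gammaA v) ⊆ {x : ℝ × ℝ | p * x.1 + q * x.2 ≤ M} :=
    convexHull_min hsub hconv
  have hmem : ((i : ℝ), (alphaH u i : ℝ)) ∈ convexHull ℝ (gammaA u) :=
    subset_convexHull ℝ _ ⟨i, hi, rfl⟩
  rw [hA] at hmem
  exact h1 hmem

lemma supB_transfer (u v : List Bool)
    (hB : convexHull ℝ (gammaB u) = convexHull ℝ (gammaB v)) (p q M : ℝ)
    (hv : ∀ j, j < v.count ltrB → p * betaH v j + q * j ≤ M) :
    ∀ j, j < u.count ltrB → p * betaH u j + q * j ≤ M := by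
  intro j hj
  have hlin : IsLinearMap ℝ (fun x : ℝ × ℝ => p * x.1 + q * x.2) := by
    constructor
    · intro x y; simp [Prod.fst_add, Prod.snd_add]; ring
    · intro c x; simp [Prod.smul_fst, Prod.smul_snd, smul_eq_mul]; ring
  have hconv : Convex ℝ {x : ℝ × ℝ | p * x.1 + q * x.2 ≤ M} := convex_halfSpace_le hlin M
  have hsub : gammaB v ⊆ {x : ℝ × ℝ | p * x.1 + q * x.2 ≤ M} := by
    rintro _ ⟨i, hi, rfl⟩
    exact hv i hi
  have h1 : convexHull ℝ (gammaB v) ⊆ {x : ℝ × ℝ | p * x.1 + q * x.2 ≤ M} :=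
    convexHull_min hsub hconv
  have hmem : ((betaH u j : ℝ), (j : ℝ)) ∈ convexHull ℝ (gammaB u) :=
    subset_convexHull ℝ _ ⟨j, hj, rfl⟩
  rw [hB] at hmem
  exact h1 hmem

lemma fA_cast (w : List Bool) (d : ℤ × ℤ) (i : ℕ) :
    ((fA w d i : ℤ) : ℝ) = (d.1 : ℝ) * i + (d.2 : ℝ) * alphaH w i := by
  unfold fA; push_cast; ring

lemma fB_cast (w : List Bool) (d : ℤ × ℤ) (j : ℕ) :
    ((fB w d j : ℤ) : ℝ) = (d.1 : ℝ) * betaH w j + (d.2 : ℝ) * j := by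
  unfold fB; push_cast; ring

lemma msupA_le (u v : List Bool) (hca : u.count ltrA = v.count ltrA)
    (hA : convexHull ℝ (gammaA u) = convexHull ℝ (gammaA v))
    (hl : 1 ≤ v.count ltrA) (d : ℤ × ℤ) :
    msup (fA u d) (v.count ltrA - 1) ≤ msup (fA v d) (v.count ltrA - 1) := by
  obtain ⟨i0, hi0, he⟩ := msup_attain (fA u d) (v.count ltrA - 1)
  rw [he]
  have hv : ∀ i, i < v.count ltrA →
      (d.1 : ℝ) * i + (d.2 : ℝ) * alphaH v i ≤ ((msup (fA v d) (v.count ltrA - 1) : ℤ) : ℝ) := by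
    intro i hi
    rw [← fA_cast]
    exact_mod_cast le_msup (fA v d) (show i ≤ v.count ltrA - 1 by omega)
  have hmem := supA_transfer u v hA (d.1 : ℝ) (d.2 : ℝ) _ hv i0 (by omega)
  rw [← fA_cast] at hmem
  exact_mod_cast hmem

lemma msupA_eq (u v : List Bool) (hca : u.count ltrA = v.count ltrA)
    (hA : convexHull ℝ (gammaA u) = convexHull ℝ (gammaA v))
    (hl : 1 ≤ v.count ltrA) (d : ℤ × ℤ) :
    msup (fA u d) (v.count ltrA - 1) = msup (fA v d) (v.count ltrA - 1) := by
  refine le_antisymm (msupA_le u v hca hA hl d) ?_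
  have := msupA_le v u hca.symm hA.symm (by omega) d
  rwa [hca] at this

lemma msupB_le (u v : List Bool) (hcb : u.count ltrB = v.count ltrB)
    (hB : convexHull ℝ (gammaB u) = convexHull ℝ (gammaB v))
    (hl : 1 ≤ v.count ltrB) (d : ℤ × ℤ) :
    msup (fB u d) (v.count ltrB - 1) ≤ msup (fB v d) (v.count ltrB - 1) := by
  obtain ⟨j0, hj0, he⟩ := msup_attain (fB u d) (v.count ltrB - 1)
  rw [he]
  have hv : ∀ j, j < v.count ltrB →
      (d.1 : ℝ) * betaH v j + (d.2 : ℝ) * j ≤ ((msup (fB v d) (v.count ltrB - 1) : ℤ) : ℝ) := by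
    intro j hj
    rw [← fB_cast]
    exact_mod_cast le_msup (fB v d) (show j ≤ v.count ltrB - 1 by omega)
  have hmem := supB_transfer u v hB (d.1 : ℝ) (d.2 : ℝ) _ hv j0 (by omega)
  rw [← fB_cast] at hmem
  exact_mod_cast hmem

lemma msupB_eq (u v : List Bool) (hcb : u.count ltrB = v.count ltrB)
    (hB : convexHull ℝ (gammaB u) = convexHull ℝ (gammaB v))
    (hl : 1 ≤ v.count ltrB) (d : ℤ × ℤ) :
    msup (fB u d) (v.count ltrB - 1) = msup (fB v d) (v.count ltrB - 1) := by
  refine le_antisymm (msupB_le u v hcb hB hl d) ?_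
  have := msupB_le v u hcb.symm hB.symm (by omega) d
  rwa [hcb] at this

/-! ### The cases `ℓ_a ≤ 3` -/

lemma alpha0_le (u v : List Bool) (hca : u.count ltrA = v.count ltrA)
    (hA : convexHull ℝ (gammaA u) = convexHull ℝ (gammaA v))
    (hl : 1 ≤ v.count ltrA) : alphaH u 0 ≤ alphaH v 0 := by
  set B : ℤ := (v.count ltrB : ℤ) with hB
  have key := msupA_eq u v hca hA hl (-(B+1), 1)
  have h1 : fA u (-(B+1), 1) 0 ≤ msup (fA u (-(B+1), 1)) (v.count ltrA - 1) :=
    le_msup _ (Nat.zero_le _)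
  have h2 : msup (fA v (-(B+1), 1)) (v.count ltrA - 1) ≤ (alphaH v 0 : ℤ) := by
    apply msup_le
    intro i hi
    show -(B+1) * (i : ℤ) + 1 * (alphaH v i : ℤ) ≤ (alphaH v 0 : ℤ)
    rcases Nat.eq_zero_or_pos i with rfl | hp
    · simp
    · have hb : (alphaH v i : ℤ) ≤ B := by
        rw [hB]; exact_mod_cast alphaH_le_countB v i
      have h1i : (1 : ℤ) ≤ (i : ℤ) := by exact_mod_cast hp
      have hB0 : (0 : ℤ) ≤ B := by rw [hB]; positivity
      have ha0 : (0 : ℤ) ≤ (alphaH v 0 : ℤ) := by positivity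
      nlinarith
  have h0 : (alphaH u 0 : ℤ) = fA u (-(B+1), 1) 0 := by
    show (alphaH u 0 : ℤ) = -(B+1) * ((0:ℕ) : ℤ) + 1 * (alphaH u 0 : ℤ)
    push_cast; ring
  have : (alphaH u 0 : ℤ) ≤ (alphaH v 0 : ℤ) := by
    rw [h0]; exact h1.trans (le_of_eq key) |>.trans h2
  exact_mod_cast this

lemma alpha0_eq (u v : List Bool) (hca : u.count ltrA = v.count ltrA)
    (hA : convexHull ℝ (gammaA u) = convexHull ℝ (gammaA v))
    (hl : 1 ≤ v.count ltrA) : alphaH u 0 = alphaH v 0 :=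
  le_antisymm (alpha0_le u v hca hA hl) (alpha0_le v u hca.symm hA.symm (by omega))

lemma alphaLast_le (u v : List Bool) (hca : u.count ltrA = v.count ltrA)
    (hA : convexHull ℝ (gammaA u) = convexHull ℝ (gammaA v))
    (hl : 1 ≤ v.count ltrA) :
    alphaH u (v.count ltrA - 1) ≤ alphaH v (v.count ltrA - 1) := by
  set B : ℤ := (v.count ltrB : ℤ) with hB
  set n : ℕ := v.count ltrA - 1 with hn
  have key := msupA_eq u v hca hA hl (B+1, 1)
  have h1 : fA u (B+1, 1) n ≤ msup (fA u (B+1, 1)) n := le_msup _ le_rfl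
  have h2 : msup (fA v (B+1, 1)) n ≤ (B+1) * (n : ℤ) + (alphaH v n : ℤ) := by
    apply msup_le
    intro i hi
    show (B+1) * (i : ℤ) + 1 * (alphaH v i : ℤ) ≤ (B+1) * (n : ℤ) + (alphaH v n : ℤ)
    rcases Nat.eq_or_lt_of_le hi with rfl | hlt
    · ring_nf; exact le_rfl
    · have hb : (alphaH v i : ℤ) ≤ B := by
        rw [hB]; exact_mod_cast alphaH_le_countB v i
      have hin : (i : ℤ) ≤ (n : ℤ) - 1 := by omega
      have hB0 : (0 : ℤ) ≤ B := by rw [hB]; positivity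
      have ha0 : (0 : ℤ) ≤ (alphaH v n : ℤ) := by positivity
      nlinarith
  have h3 : (B+1) * (n : ℤ) + (alphaH u n : ℤ) = fA u (B+1, 1) n := by
    show _ = (B+1) * (n : ℤ) + 1 * (alphaH u n : ℤ); ring
  have : (B+1) * (n : ℤ) + (alphaH u n : ℤ) ≤ (B+1) * (n : ℤ) + (alphaH v n : ℤ) := by
    rw [h3]; exact h1.trans (le_of_eq key) |>.trans h2
  have := add_le_add_iff_left ((B+1) * (n : ℤ)) |>.mp this
  exact_mod_cast this

lemma alphaLast_eq (u v : List Bool) (hca : u.count ltrA = v.count ltrA)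
    (hA : convexHull ℝ (gammaA u) = convexHull ℝ (gammaA v))
    (hl : 1 ≤ v.count ltrA) :
    alphaH u (v.count ltrA - 1) = alphaH v (v.count ltrA - 1) := by
  refine le_antisymm (alphaLast_le u v hca hA hl) ?_
  have := alphaLast_le v u hca.symm hA.symm (by omega)
  rwa [hca] at this

lemma msup_two (f : ℕ → ℤ) : msup f 2 = max (max (f 0) (f 1)) (f 2) := rfl

lemma alphaMid_eq (u v : List Bool) (hca : u.count ltrA = v.count ltrA)
    (hA : convexHull ℝ (gammaA u) = convexHull ℝ (gammaA v))
    (h3 : v.count ltrA = 3)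
    (h0 : alphaH u 0 = alphaH v 0) (h2 : alphaH u 2 = alphaH v 2) :
    alphaH u 1 = alphaH v 1 := by
  set c0 : ℤ := (alphaH v 0 : ℤ) with hc0
  set c2 : ℤ := (alphaH v 2 : ℤ) with hc2
  have key1 := msupA_eq u v hca hA (by omega) (c0 - c2, 2)
  have key2 := msupA_eq u v hca hA (by omega) (c2 - c0, -2)
  rw [h3] at key1 key2
  norm_num [msup_two] at key1 key2
  have eu0 : fA u (c0 - c2, 2) 0 = 2 * c0 := by
    show (c0 - c2) * ((0:ℕ) : ℤ) + 2 * (alphaH u 0 : ℤ) = 2 * c0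
    rw [h0]; push_cast; ring
  have ev0 : fA v (c0 - c2, 2) 0 = 2 * c0 := by
    show (c0 - c2) * ((0:ℕ) : ℤ) + 2 * (alphaH v 0 : ℤ) = 2 * c0
    push_cast; ring
  have eu2 : fA u (c0 - c2, 2) 2 = 2 * c0 := by
    show (c0 - c2) * ((2:ℕ) : ℤ) + 2 * (alphaH u 2 : ℤ) = 2 * c0
    rw [h2]; push_cast; ring
  have ev2 : fA v (c0 - c2, 2) 2 = 2 * c0 := by
    show (c0 - c2) * ((2:ℕ) : ℤ) + 2 * (alphaH v 2 : ℤ) = 2 * c0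
    push_cast; ring
  have eu1 : fA u (c0 - c2, 2) 1 = (c0 - c2) + 2 * (alphaH u 1 : ℤ) := by
    show (c0 - c2) * ((1:ℕ) : ℤ) + 2 * (alphaH u 1 : ℤ) = _
    push_cast; ring
  have ev1 : fA v (c0 - c2, 2) 1 = (c0 - c2) + 2 * (alphaH v 1 : ℤ) := by
    show (c0 - c2) * ((1:ℕ) : ℤ) + 2 * (alphaH v 1 : ℤ) = _
    push_cast; ring
  have fu0 : fA u (c2 - c0, -2) 0 = -(2 * c0) := by
    show (c2 - c0) * ((0:ℕ) : ℤ) + (-2) * (alphaH u 0 : ℤ) = _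
    rw [h0]; push_cast; ring
  have fv0 : fA v (c2 - c0, -2) 0 = -(2 * c0) := by
    show (c2 - c0) * ((0:ℕ) : ℤ) + (-2) * (alphaH v 0 : ℤ) = _
    push_cast; ring
  have fu2 : fA u (c2 - c0, -2) 2 = -(2 * c0) := by
    show (c2 - c0) * ((2:ℕ) : ℤ) + (-2) * (alphaH u 2 : ℤ) = _
    rw [h2]; push_cast; ring
  have fv2 : fA v (c2 - c0, -2) 2 = -(2 * c0) := by
    show (c2 - c0) * ((2:ℕ) : ℤ) + (-2) * (alphaH v 2 : ℤ) = _
    push_cast; ring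
  have fu1 : fA u (c2 - c0, -2) 1 = -((c0 - c2) + 2 * (alphaH u 1 : ℤ)) := by
    show (c2 - c0) * ((1:ℕ) : ℤ) + (-2) * (alphaH u 1 : ℤ) = _
    push_cast; ring
  have fv1 : fA v (c2 - c0, -2) 1 = -((c0 - c2) + 2 * (alphaH v 1 : ℤ)) := by
    show (c2 - c0) * ((1:ℕ) : ℤ) + (-2) * (alphaH v 1 : ℤ) = _
    push_cast; ring
  rw [eu0, eu1, eu2, ev0, ev1, ev2] at key1
  rw [fu0, fu1, fu2, fv0, fv1, fv2] at key2
  set su : ℤ := (c0 - c2) + 2 * (alphaH u 1 : ℤ) with hsu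
  set sv : ℤ := (c0 - c2) + 2 * (alphaH v 1 : ℤ) with hsv
  have : su = sv := by omega
  have : (alphaH u 1 : ℤ) = (alphaH v 1 : ℤ) := by omega
  exact_mod_cast this

lemma small_case (u v : List Bool) (hca : u.count ltrA = v.count ltrA)
    (hcb : u.count ltrB = v.count ltrB)
    (hA : convexHull ℝ (gammaA u) = convexHull ℝ (gammaA v))
    (h3 : v.count ltrA ≤ 3) : u = v := by
  apply reconstruct u v hca hcb
  intro i hi
  have hl : 1 ≤ v.count ltrA := by omega
  have h0 := alpha0_eq u v hca hA hl
  have hlast := alphaLast_eq u v hca hA hl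
  interval_cases hℓ : (v.count ltrA)
  · -- ℓ = 1
    have : i = 0 := by omega
    subst this; exact h0
  · -- ℓ = 2
    norm_num at hlast
    interval_cases i
    · exact h0
    · exact hlast
  · -- ℓ = 3
    norm_num at hlast
    have hmid := alphaMid_eq u v (by omega) hA (by omega) h0 hlast
    interval_cases i
    · exact h0
    · exact hmid
    · exact hlast

/-! ### The case `ℓ_a = 4`, `ℓ_b ≤ 6` -/

lemma keyOf_congr (lb : ℕ) (u v : List Bool)
    (hA' : ∀ d ∈ dirsA, msup (fA u d) 3 = msup (fA v d) 3)
    (hB' : lb ≠ 0 → ∀ d ∈ dirsB, msup (fB u d) (lb - 1) = msup (fB v d) (lb - 1)) :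
    keyOf lb u = keyOf lb v := by
  unfold keyOf
  congr 1
  congr 1
  · exact List.map_congr_left hA'
  · rcases Nat.eq_zero_or_pos lb with rfl | hp
    · simp
    · rw [if_neg (by omega), if_neg (by omega)]
      exact List.map_congr_left (fun d hd => hB' (by omega) d hd)

lemma words_zero (b : ℕ) : words 0 b = [List.replicate b false] := rfl

lemma words_succ (a b : ℕ) : words (a+1) b = wordsAux (words a) b := rfl

lemma words_complete : ∀ w : List Bool, w ∈ words (w.count ltrA) (w.count ltrB) := by
  intro w
  induction w with
  | nil => simp [words_zero]
  | cons x rest ih =>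
    cases x with
    | true =>
      rw [count_cons_A_true, count_cons_B_true, words_succ]
      cases hb : rest.count ltrB with
      | zero =>
        rw [hb] at ih
        show _ ∈ wordsAux (words (rest.count ltrA)) 0
        simp only [wordsAux]
        exact List.mem_map_of_mem ih
      | succ b =>
        rw [hb] at ih
        show _ ∈ wordsAux (words (rest.count ltrA)) (b+1)
        simp only [wordsAux]
        exact List.mem_append_left _ (List.mem_map_of_mem ih)
    | false =>
      rw [count_cons_A_false, count_cons_B_false]
      cases ha : rest.count ltrA with
      | zero =>
        rw [ha] at ih
        rw [words_zero] at ih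
        simp at ih
        rw [words_zero]
        simp only [List.mem_singleton, List.replicate_succ]
        exact congrArg (List.cons false) ih
      | succ a =>
        rw [ha] at ih
        rw [words_succ]
        show _ ∈ wordsAux (words a) (rest.count ltrB + 1)
        simp only [wordsAux]
        refine List.mem_append_right _ (List.mem_map_of_mem ?_)
        exact ih

lemma finite_case (lb : ℕ) (hchk : check lb = true) (u v : List Bool)
    (hcau : u.count ltrA = 4) (hcbu : u.count ltrB = lb)
    (hcav : v.count ltrA = 4) (hcbv : v.count ltrB = lb)
    (hkey : keyOf lb u = keyOf lb v) : u = v := by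
  have hu := words_complete u
  rw [hcau, hcbu] at hu
  have hv := words_complete v
  rw [hcav, hcbv] at hv
  rw [check] at hchk
  simp only [List.all_eq_true, List.mem_map] at hchk
  have h1 := hchk (u, keyOf lb u) ⟨u, hu, rfl⟩ (v, keyOf lb v) ⟨v, hv, rfl⟩
  have hb : (keyOf lb u == keyOf lb v) = true := by rw [hkey]; exact beq_self_eq_true _
  dsimp only at h1
  rw [hb, Bool.not_true, Bool.false_or] at h1
  exact eq_of_beq h1

/-! ### Main theorem -/

theorem not_isoterm_bounds (v : List Bool)
    (h : ∃ u : List Bool, u ≠ v ∧ u.count ltrA = v.count ltrA ∧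
      u.count ltrB = v.count ltrB ∧
      convexHull ℝ (gammaA u) = convexHull ℝ (gammaA v) ∧
      convexHull ℝ (gammaB u) = convexHull ℝ (gammaB v)) :
    4 ≤ v.count ltrA ∧ (v.count ltrA = 4 → 6 < v.count ltrB) := by
  obtain ⟨u, hne, hca, hcb, hA, hB⟩ := h
  constructor
  · by_contra hlt
    push_neg at hlt
    exact hne (small_case u v hca hcb hA (by omega))
  · intro h4
    by_contra hlb
    push_neg at hlb
    -- ℓ_b ≤ 6
    apply hne
    have hkey : keyOf (v.count ltrB) u = keyOf (v.count ltrB) v := by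
      apply keyOf_congr
      · intro d _
        have := msupA_eq u v hca hA (by omega) d
        rwa [h4] at this
      · intro hlb0 d _
        exact msupB_eq u v hcb hB (by omega) d
    refine finite_case (v.count ltrB) ?_ u v (hca.trans h4) hcb h4 rfl hkey
    set n := v.count ltrB with hn
    clear_value n
    interval_cases n
    · decide
    · decide
    · decide
    · decide
    · decide
    · decide
    · decide
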